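/- Let q, n ≥ 1, H ∈ ℝ^{q×n}, h ∈ ℝ^q with h_j > 0 for every j, suppose P(H,h) is bounded, and define V(e) := max_{1 ≤ j ≤ q} (H·e)_j / h_j. Let M : ℕ → ℝ^{n×n} and λ : ℕ → ℝ with 0 < λ(t) < 1 for all t, and suppose for every t there exists an entrywise nonnegative P(t) ∈ ℝ^{q×q} with P(t)·H = H·M(t) and P(t)·h ≤ λ(t)·h componentwise. Let λ̄ ∈ (0,1) satisfy λ(t) ≤ λ̄ for all t. Let w : ℕ → ℝⁿ and c ≥ 0 satisfy V(w(t)) ≤ c for all t. If e : ℕ → ℝⁿ satisfies e(t+1) = M(t)·e(t) + w(t) for all t, then for every t ∈ ℕ: V(e(t)) ≤ λ̄^t · V(e(0)) + c·(1 − λ̄^t)/(1 − λ̄); in particular V(e(t)) ≤ λ̄^t · V(e(0)) + c/(1 − λ̄), so the error converges exponentially fast to the bounded set {e : V(e) ≤ c/(1 − λ̄)}. -/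

import Mathlib

/-- The gauge `V(e) = max_j (H·e)_j / h_j` of the polyhedron `P(H,h)`. -/
noncomputable def polyGauge {q n : ℕ} (hq : 0 < q)
    (H : Matrix (Fin q) (Fin n) ℝ) (h : Fin q → ℝ) (e : Fin n → ℝ) : ℝ :=
  Finset.univ.sup' ⟨⟨0, hq⟩, Finset.mem_univ _⟩ fun j => H.mulVec e j / h j

lemma polyGauge_le_iff {q n : ℕ} (hq : 0 < q)
    (H : Matrix (Fin q) (Fin n) ℝ) (h : Fin q → ℝ) (e : Fin n → ℝ) (a : ℝ) :
    polyGauge hq H h e ≤ a ↔ ∀ j, H.mulVec e j / h j ≤ a := by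
  exact ⟨fun h' j => (Finset.le_sup' (fun j => H.mulVec e j / h j) (Finset.mem_univ j)).trans h',
    fun h' => Finset.sup'_le _ _ fun j _ => h' j⟩

lemma le_polyGauge {q n : ℕ} (hq : 0 < q)
    (H : Matrix (Fin q) (Fin n) ℝ) (h : Fin q → ℝ) (e : Fin n → ℝ) (j : Fin q) :
    H.mulVec e j / h j ≤ polyGauge hq H h e := by
  exact Finset.le_sup' (fun j => H.mulVec e j / h j) (Finset.mem_univ j)

lemma polyGauge_nonneg {q n : ℕ} (hq : 0 < q)
    (H : Matrix (Fin q) (Fin n) ℝ) (h : Fin q → ℝ) (hh : ∀ j, 0 < h j)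
    (hbdd : Bornology.IsBounded {e : Fin n → ℝ | ∀ j, H.mulVec e j ≤ h j})
    (x : Fin n → ℝ) : 0 ≤ polyGauge hq H h x := by
  by_contra hneg
  push_neg at hneg
  have hx : ∀ j, H.mulVec x j < 0 := by
    intro j
    have := (le_polyGauge hq H h x j).trans_lt hneg
    have hj := hh j
    nlinarith [div_lt_iff₀ hj |>.mp this]
  have hx0 : x ≠ 0 := by
    intro h0
    have := hx ⟨0, hq⟩
    simp [h0, Matrix.mulVec_zero] at this
  obtain ⟨r, hr⟩ := Bornology.IsBounded.exists_norm_le hbdd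
  have hxnorm : 0 < ‖x‖ := norm_pos_iff.mpr hx0
  set s : ℝ := (|r| + 1) / ‖x‖ with hs
  have hs0 : 0 ≤ s := by positivity
  have hmem : (s • x) ∈ {e : Fin n → ℝ | ∀ j, H.mulVec e j ≤ h j} := by
    intro j
    have : H.mulVec (s • x) j = s * H.mulVec x j := by
      simp [Matrix.mulVec_smul]
    rw [this]
    have : s * H.mulVec x j ≤ 0 := mul_nonpos_of_nonneg_of_nonpos hs0 (hx j).le
    linarith [hh j]
  have := hr _ hmem
  rw [norm_smul] at this
  have : s * ‖x‖ ≤ r := by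
    simpa [Real.norm_eq_abs, abs_of_nonneg hs0] using this
  rw [hs, div_mul_cancel₀ _ (ne_of_gt hxnorm)] at this
  have : r ≤ |r| := le_abs_self r
  linarith

lemma polyGauge_add_le {q n : ℕ} (hq : 0 < q)
    (H : Matrix (Fin q) (Fin n) ℝ) (h : Fin q → ℝ) (hh : ∀ j, 0 < h j)
    (a b : Fin n → ℝ) :
    polyGauge hq H h (a + b) ≤ polyGauge hq H h a + polyGauge hq H h b := by
  rw [polyGauge_le_iff]
  intro j
  rw [Matrix.mulVec_add]
  have : (H.mulVec a + H.mulVec b) j / h j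
      = H.mulVec a j / h j + H.mulVec b j / h j := by
    simp [add_div]
  rw [this]
  exact add_le_add (le_polyGauge hq H h a j) (le_polyGauge hq H h b j)

/-- disturbance case of Theorem 3: along the perturbed switched
closed-loop error dynamics `e(t+1) = M(t)·e(t) + w(t)` with `V(w(t)) ≤ c`,
the polyhedral Lyapunov function converges exponentially to the bounded set
`{e : V(e) ≤ c/(1−λ̄)}`. -/
theorem stmt_7 (q n : ℕ) (hq : 1 ≤ q) (hn : 1 ≤ n)
    (H : Matrix (Fin q) (Fin n) ℝ) (h : Fin q → ℝ) (hh : ∀ j, 0 < h j)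
    (hbdd : Bornology.IsBounded {e : Fin n → ℝ | ∀ j, H.mulVec e j ≤ h j})
    (M : ℕ → Matrix (Fin n) (Fin n) ℝ) (lam : ℕ → ℝ)
    (hlam : ∀ t, 0 < lam t ∧ lam t < 1)
    (hdual : ∀ t, ∃ P : Matrix (Fin q) (Fin q) ℝ,
      (∀ i j, 0 ≤ P i j) ∧ P * H = H * (M t) ∧ ∀ j, P.mulVec h j ≤ lam t * h j)
    (lambar : ℝ) (hlambar : 0 < lambar ∧ lambar < 1)
    (hle : ∀ t, lam t ≤ lambar)
    (w : ℕ → Fin n → ℝ) (c : ℝ) (hc : 0 ≤ c)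
    (hw : ∀ t, polyGauge hq H h (w t) ≤ c)
    (e : ℕ → Fin n → ℝ)
    (hdyn : ∀ t, e (t + 1) = (M t).mulVec (e t) + w t) :
    ∀ t : ℕ,
      polyGauge hq H h (e t) ≤
        lambar ^ t * polyGauge hq H h (e 0) + c * (1 - lambar ^ t) / (1 - lambar) ∧
      polyGauge hq H h (e t) ≤
        lambar ^ t * polyGauge hq H h (e 0) + c / (1 - lambar) := by
  set V := polyGauge hq H h with hV
  have hVnn : ∀ x, 0 ≤ V x := polyGauge_nonneg hq H h hh hbdd
  have hl1 : 0 < 1 - lambar := by linarith [hlambar.2]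
  -- contraction step
  have hcontr : ∀ t x, V ((M t).mulVec x) ≤ lam t * V x := by
    intro t x
    obtain ⟨P, hPnn, hPH, hPh⟩ := hdual t
    have key : H.mulVec ((M t).mulVec x) = P.mulVec (H.mulVec x) := by
      rw [Matrix.mulVec_mulVec, Matrix.mulVec_mulVec, hPH]
    rw [hV, polyGauge_le_iff]
    intro j
    rw [key]
    have hbound : P.mulVec (H.mulVec x) j ≤ V x * P.mulVec h j := by
      rw [Matrix.mulVec, Matrix.mulVec, dotProduct, dotProduct,
        Finset.mul_sum]
      apply Finset.sum_le_sum
      intro k _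
      have h1 : H.mulVec x k ≤ V x * h k := by
        have := le_polyGauge hq H h x k
        rw [div_le_iff₀ (hh k)] at this
        exact this
      calc P j k * H.mulVec x k ≤ P j k * (V x * h k) :=
            mul_le_mul_of_nonneg_left h1 (hPnn j k)
        _ = V x * (P j k * h k) := by ring
    have h2 : V x * P.mulVec h j ≤ V x * (lam t * h j) :=
      mul_le_mul_of_nonneg_left (hPh j) (hVnn x)
    rw [div_le_iff₀ (hh j)]
    calc P.mulVec (H.mulVec x) j ≤ V x * (lam t * h j) := hbound.trans h2
      _ = lam t * V x * h j := by ring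
  have hstep : ∀ t, V (e (t + 1)) ≤ lambar * V (e t) + c := by
    intro t
    rw [hdyn t]
    calc V ((M t).mulVec (e t) + w t)
        ≤ V ((M t).mulVec (e t)) + V (w t) := polyGauge_add_le hq H h hh _ _
      _ ≤ lam t * V (e t) + c := add_le_add (hcontr t (e t)) (hw t)
      _ ≤ lambar * V (e t) + c := by
          have := mul_le_mul_of_nonneg_right (hle t) (hVnn (e t))
          linarith
  -- main induction
  have main : ∀ t, V (e t) ≤ lambar ^ t * V (e 0) + c * (1 - lambar ^ t) / (1 - lambar) := by
    intro t
    induction t with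
    | zero => simp
    | succ t ih =>
      calc V (e (t + 1)) ≤ lambar * V (e t) + c := hstep t
        _ ≤ lambar * (lambar ^ t * V (e 0) + c * (1 - lambar ^ t) / (1 - lambar)) + c := by
            nlinarith [hlambar.1]
        _ = lambar ^ (t + 1) * V (e 0) + c * (1 - lambar ^ (t + 1)) / (1 - lambar) := by
            field_simp
            ring
  intro t
  refine ⟨main t, (main t).trans ?_⟩
  have hpow0 : 0 ≤ lambar ^ t := pow_nonneg hlambar.1.le t
  have : c * (1 - lambar ^ t) / (1 - lambar) ≤ c / (1 - lambar) := by
    rw [div_le_div_iff₀ hl1 hl1]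
    nlinarith [mul_nonneg (mul_nonneg hc hpow0) hl1.le]
  linarith
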